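/- Let T̃ : ℝ² → ℝ be continuously differentiable with compact support, let φ : ℝ² → ℝ be twice continuously differentiable with bounded gradient ∇φ, and fix k, l ∈ ℝ². Let χ_l(x) = −2 sin(l·x), and define A^q(x) = (∂T̃/∂x_q)(x − ∇φ(x)) for q = 1, 2. Then the derivative at ε = 0 of ε ↦ (2π)⁻¹ ∫_{ℝ²} e^{−i k·x} T̃(x − ∇φ(x) − ε ∇χ_l(x)) dx equals Σ_{q=1,2} l_q ( Â^q(k+l) + Â^q(k−l) ), where Â^q denotes the Fourier transform of A^q and l_q denotes the q-th component of l. -/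

import Mathlib

open MeasureTheory
open scoped RealInnerProductSpace

noncomputable section

/-- `ℝ²` as a Euclidean (inner product) space. -/
abbrev E2 := EuclideanSpace ℝ (Fin 2)

/-- The Fourier transform with the paper's normalization:
`f̂(l) = (2π)⁻¹ ∫ e^{-i x·l} f(x) dx`. -/
noncomputable def ft (f : E2 → ℂ) (l : E2) : ℂ :=
  (2 * Real.pi)⁻¹ • ∫ x : E2, Complex.exp (-(Complex.I * (⟪x, l⟫ : ℂ))) * f x

/-- Fourier transform of a real-valued function. -/
noncomputable def ftR (f : E2 → ℝ) (l : E2) : ℂ := ft (fun x => (f x : ℂ)) l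

/-- The `q`-th partial derivative of `f : ℝ² → ℝ`. -/
noncomputable def pderiv2 (q : Fin 2) (f : E2 → ℝ) (x : E2) : ℝ :=
  fderiv ℝ f x (EuclideanSpace.single q 1)

/-- The anti-lensed gradient field `A^q(x) = (∂T/∂x_q)(x - ∇φ(x))`. -/
noncomputable def Aq (T φ : E2 → ℝ) (q : Fin 2) (x : E2) : ℝ :=
  pderiv2 q T (x - gradient φ x)

/-- The (negative) sine mode `χ_l(x) = -2 sin(l·x)`. -/
noncomputable def chil (l : E2) (x : E2) : ℝ := -(2 * Real.sin ⟪l, x⟫)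


lemma hasGradientAt_chil (l x : E2) :
    HasGradientAt (chil l) ((-(2 * Real.cos ⟪l, x⟫)) • l) x := by
  rw [hasGradientAt_iff_hasFDerivAt]
  have h1 : HasFDerivAt (fun y : E2 => ⟪l, y⟫) (innerSL ℝ l) x := (innerSL ℝ l).hasFDerivAt
  have h2 : HasFDerivAt (fun y : E2 => Real.sin ⟪l, y⟫)
      (Real.cos ⟪l, x⟫ • innerSL ℝ l) x :=
    (Real.hasDerivAt_sin ⟪l, x⟫).comp_hasFDerivAt x h1
  have h3 := h2.const_smul (-2 : ℝ)
  convert h3 using 2 with y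
  · rfl
  · rfl
  · funext y; simp only [chil, Pi.smul_apply, smul_eq_mul]; ring
  · ext v
    simp only [InnerProductSpace.toDual_apply_apply, real_inner_smul_left,
      ContinuousLinearMap.smul_apply, innerSL_apply_apply, smul_eq_mul]
    ring

lemma gradient_chil (l x : E2) :
    gradient (chil l) x = (-(2 * Real.cos ⟪l, x⟫)) • l :=
  (hasGradientAt_chil l x).gradient

lemma key_exp (a b : ℝ) :
    Complex.exp (-(Complex.I * ((b + a : ℝ) : ℂ))) +
      Complex.exp (-(Complex.I * ((b - a : ℝ) : ℂ))) =
    Complex.exp (-(Complex.I * (b : ℂ))) * ((2 * Real.cos a : ℝ) : ℂ) := by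
  push_cast
  rw [show (-(Complex.I * ((b : ℂ) + a))) = -(Complex.I * b) + -(a * Complex.I) by ring,
    show (-(Complex.I * ((b : ℂ) - a))) = -(Complex.I * b) + (a : ℂ) * Complex.I by ring,
    Complex.exp_add, Complex.exp_add, ← mul_add]
  rw [show Complex.exp (-(↑a * Complex.I)) + Complex.exp (↑a * Complex.I)
      = 2 * Complex.cos a by rw [Complex.two_cos]; ring]

lemma euclid_decomp (l : E2) :
    l = ∑ q : Fin 2, (l q) • EuclideanSpace.single q (1 : ℝ) := by
  ext j
  simp [Fin.sum_univ_two, EuclideanSpace.single_apply]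
  fin_cases j <;> simp

/-- Derivative of the Fourier coefficient of the anti-lensed field along the sine mode at
frequency `l`: it equals `∑_q l_q (Â^q(k+l) + Â^q(k-l))`. -/
theorem stmt6 (T : E2 → ℝ) (hT : ContDiff ℝ 1 T) (hTc : HasCompactSupport T)
    (φ : E2 → ℝ) (hφ : ContDiff ℝ 2 φ)
    (Mφ : ℝ) (hbφ : ∀ x, ‖gradient φ x‖ ≤ Mφ)
    (k l : E2) :
    HasDerivAt
      (fun ε : ℝ => (2 * Real.pi)⁻¹ • ∫ x : E2,
        Complex.exp (-(Complex.I * (⟪x, k⟫ : ℂ))) *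
          ((T (x - gradient φ x - ε • gradient (chil l) x) : ℝ) : ℂ))
      (∑ q : Fin 2, ((l q : ℝ) : ℂ) *
        (ftR (Aq T φ q) (k + l) + ftR (Aq T φ q) (k - l)))
      0 := by
  classical
  -- abbreviations
  set u : E2 → E2 := fun x => x - gradient φ x with hu_def
  set g : E2 → E2 := fun x => gradient (chil l) x with hg_def
  have hg_eq : ∀ x, g x = (-(2 * Real.cos ⟪l, x⟫)) • l := fun x => gradient_chil l x
  have hMφ0 : 0 ≤ Mφ := le_trans (norm_nonneg _) (hbφ 0)
  have hg_norm : ∀ x, ‖g x‖ ≤ 2 * ‖l‖ := by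
    intro x
    rw [hg_eq x, norm_smul]
    have h1 : ‖(-(2 * Real.cos ⟪l, x⟫))‖ ≤ 2 := by
      rw [Real.norm_eq_abs, abs_neg, abs_mul, abs_two]
      nlinarith [Real.abs_cos_le_one ⟪l, x⟫]
    exact mul_le_mul_of_nonneg_right h1 (norm_nonneg l)
  have hg_cont : Continuous g := by
    have : g = fun x => (-(2 * Real.cos ⟪l, x⟫)) • l := funext hg_eq
    rw [this]
    exact ((continuous_const.mul
      (Real.continuous_cos.comp (continuous_const.inner continuous_id))).neg).smul
      continuous_const
  have hgrad_cont : Continuous fun x : E2 => gradient φ x := by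
    have : (fun x : E2 => gradient φ x)
        = fun x => (InnerProductSpace.toDual ℝ E2).symm (fderiv ℝ φ x) := rfl
    rw [this]
    have h2 : Continuous (fderiv ℝ φ) := hφ.continuous_fderiv (by norm_num)
    exact (InnerProductSpace.toDual ℝ E2).symm.continuous.comp h2
  have hu_cont : Continuous u := continuous_id.sub hgrad_cont
  have hT' : Continuous (fderiv ℝ T) := hT.continuous_fderiv one_ne_zero
  have hTc' : HasCompactSupport (fderiv ℝ T) := hTc.fderiv (𝕜 := ℝ)
  obtain ⟨C, hC⟩ := hTc'.exists_bound_of_continuous hT'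
  have hC0 : 0 ≤ C := le_trans (norm_nonneg _) (hC 0)
  obtain ⟨R₀, hR₀⟩ := hTc.isBounded.subset_closedBall 0
  set R : ℝ := R₀ + Mφ + 2 * ‖l‖ + 1 with hR_def
  -- vanishing of T and its derivative far away
  have hTzero : ∀ y : E2, R₀ < ‖y‖ → T y = 0 ∧ fderiv ℝ T y = 0 := by
    intro y hy
    have hy' : y ∉ tsupport T := by
      intro h
      have := hR₀ h
      rw [Metric.mem_closedBall, dist_zero_right] at this
      linarith
    refine ⟨image_eq_zero_of_notMem_tsupport hy', ?_⟩
    by_contra h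
    exact hy' (support_fderiv_subset ℝ (Function.mem_support.mpr h))
  have hsupp : ∀ ε : ℝ, |ε| ≤ 1 → ∀ x : E2, R < ‖x‖ → R₀ < ‖u x - ε • g x‖ := by
    intro ε hε x hx
    have h2 : ‖ε • g x‖ ≤ 2 * ‖l‖ := by
      rw [norm_smul, Real.norm_eq_abs]
      calc |ε| * ‖g x‖ ≤ 1 * (2 * ‖l‖) :=
        mul_le_mul hε (hg_norm x) (norm_nonneg _) zero_le_one
      _ = 2 * ‖l‖ := one_mul _
    have h1 : ‖gradient φ x + ε • g x‖ ≤ Mφ + 2 * ‖l‖ :=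
      (norm_add_le _ _).trans (add_le_add (hbφ x) h2)
    have h3 : u x - ε • g x = x - (gradient φ x + ε • g x) := by
      simp only [hu_def]; abel
    have h4 : ‖x‖ - ‖gradient φ x + ε • g x‖ ≤ ‖x - (gradient φ x + ε • g x)‖ :=
      norm_sub_norm_le _ _
    rw [h3]
    simp only [hR_def] at hx
    linarith
  -- the integrand and its derivative
  set F : ℝ → E2 → ℂ := fun ε x =>
    Complex.exp (-(Complex.I * (⟪x, k⟫ : ℂ))) * ((T (u x - ε • g x) : ℝ) : ℂ) with hF_def
  set F' : ℝ → E2 → ℂ := fun ε x =>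
    Complex.exp (-(Complex.I * (⟪x, k⟫ : ℂ))) *
      ((-(fderiv ℝ T (u x - ε • g x) (g x)) : ℝ) : ℂ) with hF'_def
  have hexp_cont : ∀ s : E2, Continuous fun x : E2 => Complex.exp (-(Complex.I * (⟪x, s⟫ : ℂ))) := by
    intro s
    have h1 : Continuous fun x : E2 => (⟪x, s⟫ : ℝ) := continuous_id.inner continuous_const
    exact Complex.continuous_exp.comp
      ((continuous_const.mul (Complex.continuous_ofReal.comp h1)).neg)
  have hexp_norm : ∀ (r : ℝ), ‖Complex.exp (-(Complex.I * (r : ℂ)))‖ = 1 := by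
    intro r
    rw [Complex.norm_exp]
    simp
  have harg_cont : ∀ ε : ℝ, Continuous fun x => u x - ε • g x := fun ε =>
    hu_cont.sub (hg_cont.const_smul ε)
  have hF_cont : ∀ ε, Continuous (F ε) := by
    intro ε
    exact (hexp_cont k).mul
      (Complex.continuous_ofReal.comp (hT.continuous.comp (harg_cont ε)))
  have hF'_cont : ∀ ε, Continuous (F' ε) := by
    intro ε
    exact (hexp_cont k).mul
      (Complex.continuous_ofReal.comp
        (((hT'.comp (harg_cont ε)).clm_apply hg_cont).neg))
  have hF_int : Integrable (F 0) := by
    apply (hF_cont 0).integrable_of_hasCompactSupport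
    apply HasCompactSupport.intro (isCompact_closedBall (0 : E2) R)
    intro x hx
    rw [Metric.mem_closedBall, dist_zero_right, not_le] at hx
    have := (hTzero _ (hsupp 0 (by norm_num) x hx)).1
    simp only [hF_def, this, Complex.ofReal_zero, mul_zero]
  set bound : E2 → ℝ :=
    Set.indicator (Metric.closedBall (0 : E2) R) (fun _ => C * (2 * ‖l‖)) with hbound_def
  have h_bound : ∀ x : E2, ∀ ε ∈ Metric.ball (0 : ℝ) 1, ‖F' ε x‖ ≤ bound x := by
    intro x ε hε
    rw [Metric.mem_ball, dist_zero_right, Real.norm_eq_abs] at hε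
    by_cases hx : x ∈ Metric.closedBall (0 : E2) R
    · rw [hbound_def, Set.indicator_of_mem hx]
      have : ‖F' ε x‖ = |(-(fderiv ℝ T (u x - ε • g x) (g x)))| := by
        rw [hF'_def]
        simp only
        rw [norm_mul, hexp_norm, one_mul, Complex.norm_real, Real.norm_eq_abs]
      rw [this, abs_neg]
      calc |fderiv ℝ T (u x - ε • g x) (g x)|
          ≤ ‖fderiv ℝ T (u x - ε • g x)‖ * ‖g x‖ :=
            (fderiv ℝ T (u x - ε • g x)).le_opNorm (g x)
        _ ≤ C * (2 * ‖l‖) :=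
            mul_le_mul (hC _) (hg_norm x) (norm_nonneg _) hC0
    · rw [hbound_def, Set.indicator_of_notMem hx]
      rw [Metric.mem_closedBall, dist_zero_right, not_le] at hx
      have := (hTzero _ (hsupp ε hε.le x hx)).2
      simp only [hF'_def, this]
      simp
  have hbound_int : Integrable bound := by
    rw [hbound_def]
    apply (integrableOn_const
      ((isCompact_closedBall (0 : E2) R).measure_lt_top.ne)).integrable_indicator
      measurableSet_closedBall
  have h_diff : ∀ x : E2, ∀ ε ∈ Metric.ball (0 : ℝ) 1, HasDerivAt (F · x) (F' ε x) ε := by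
    intro x ε _
    have hεd : HasDerivAt (fun ε : ℝ => u x - ε • g x) (-(g x)) ε := by
      simpa using ((hasDerivAt_id ε).smul_const (g x)).const_sub (u x)
    have hTd : HasFDerivAt T (fderiv ℝ T (u x - ε • g x)) (u x - ε • g x) :=
      ((hT.differentiable one_ne_zero) _).hasFDerivAt
    have h1 : HasDerivAt (fun ε : ℝ => T (u x - ε • g x))
        (-(fderiv ℝ T (u x - ε • g x) (g x))) ε := by
      have := hTd.comp_hasDerivAt ε hεd
      rw [map_neg] at this; exact this
    exact h1.ofReal_comp.const_mul _
  obtain ⟨-, hder⟩ := hasDerivAt_integral_of_dominated_loc_of_deriv_le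
    (F := F) (F' := F') (x₀ := (0:ℝ)) (bound := bound)
    (Metric.ball_mem_nhds 0 one_pos)
    (Filter.Eventually.of_forall fun ε => (hF_cont ε).aestronglyMeasurable)
    hF_int
    ((hF'_cont 0).aestronglyMeasurable)
    (Filter.Eventually.of_forall fun x => h_bound x)
    hbound_int
    (Filter.Eventually.of_forall fun x => h_diff x)
  -- continuity and support of Aq
  have hAq_eq : ∀ q (x : E2), Aq T φ q x = fderiv ℝ T (u x) (EuclideanSpace.single q 1) := by
    intro q x
    simp only [Aq, pderiv2, hu_def]
  have hAq_cont : ∀ q : Fin 2, Continuous (Aq T φ q) := by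
    intro q
    have : Aq T φ q = fun x => fderiv ℝ T (u x) (EuclideanSpace.single q 1) :=
      funext (hAq_eq q)
    rw [this]
    exact (hT'.comp hu_cont).clm_apply continuous_const
  have hAq_supp : ∀ q : Fin 2, ∀ x : E2, R < ‖x‖ → Aq T φ q x = 0 := by
    intro q x hx
    have h0 : R₀ < ‖u x‖ := by
      have := hsupp 0 (by norm_num) x hx
      simpa using this
    rw [hAq_eq, (hTzero _ h0).2]
    simp
  -- integrability of the Fourier integrands
  have hG_int : ∀ (s : E2) (q : Fin 2),
      Integrable (fun x => Complex.exp (-(Complex.I * (⟪x, s⟫ : ℂ))) * ((Aq T φ q x : ℝ) : ℂ)) := by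
    intro s q
    apply Continuous.integrable_of_hasCompactSupport
    · exact (hexp_cont s).mul (Complex.continuous_ofReal.comp (hAq_cont q))
    · apply HasCompactSupport.intro (isCompact_closedBall (0 : E2) R)
      intro x hx
      rw [Metric.mem_closedBall, dist_zero_right, not_le] at hx
      rw [hAq_supp q x hx]
      simp
  -- pointwise identity for F' 0
  have hpt : ∀ x : E2, F' 0 x = ∑ q : Fin 2, ((l q : ℝ) : ℂ) *
      ((Complex.exp (-(Complex.I * (⟪x, k + l⟫ : ℂ))) +
        Complex.exp (-(Complex.I * (⟪x, k - l⟫ : ℂ)))) * ((Aq T φ q x : ℝ) : ℂ)) := by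
    intro x
    have hD : fderiv ℝ T (u x) l = ∑ q : Fin 2, l q * Aq T φ q x := by
      conv_lhs => rw [euclid_decomp l]
      rw [map_sum]
      refine Finset.sum_congr rfl fun q _ => ?_
      rw [(fderiv ℝ T (u x)).map_smul, smul_eq_mul, hAq_eq]
    have hkp : (⟪x, k + l⟫ : ℝ) = ⟪x, k⟫ + ⟪x, l⟫ := inner_add_right x k l
    have hkm : (⟪x, k - l⟫ : ℝ) = ⟪x, k⟫ - ⟪x, l⟫ := inner_sub_right x k l
    have hval : F' 0 x = Complex.exp (-(Complex.I * (⟪x, k⟫ : ℂ))) *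
        (((2 * Real.cos ⟪x, l⟫) * ∑ q : Fin 2, l q * Aq T φ q x : ℝ) : ℂ) := by
      rw [hF'_def]
      simp only [zero_smul, sub_zero]
      congr 2
      rw [hg_eq x]
      simp only [ContinuousLinearMap.neg_apply, _root_.map_smul, smul_eq_mul, hD,
        real_inner_comm x l]
      ring
    rw [hval, hkp, hkm, key_exp (⟪x, l⟫) (⟪x, k⟫)]
    push_cast
    rw [Finset.mul_sum]
    · rw [Finset.mul_sum]
      refine Finset.sum_congr rfl fun q _ => ?_
      ring
  -- compute the integral of F' 0
  have hint_eq : ∫ x : E2, F' 0 x = ∑ q : Fin 2, ((l q : ℝ) : ℂ) *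
      ((∫ x : E2, Complex.exp (-(Complex.I * (⟪x, k + l⟫ : ℂ))) * ((Aq T φ q x : ℝ) : ℂ)) +
       (∫ x : E2, Complex.exp (-(Complex.I * (⟪x, k - l⟫ : ℂ))) * ((Aq T φ q x : ℝ) : ℂ))) := by
    have hterm_int : ∀ q : Fin 2, Integrable (fun x : E2 => ((l q : ℝ) : ℂ) *
        ((Complex.exp (-(Complex.I * (⟪x, k + l⟫ : ℂ))) +
          Complex.exp (-(Complex.I * (⟪x, k - l⟫ : ℂ)))) * ((Aq T φ q x : ℝ) : ℂ))) := by
      intro q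
      have h1 := ((hG_int (k + l) q).add (hG_int (k - l) q)).const_mul ((l q : ℝ) : ℂ)
      refine h1.congr ?_
      filter_upwards with x
      simp only [Pi.add_apply]
      ring
    calc ∫ x : E2, F' 0 x
        = ∫ x : E2, ∑ q : Fin 2, ((l q : ℝ) : ℂ) *
          ((Complex.exp (-(Complex.I * (⟪x, k + l⟫ : ℂ))) +
            Complex.exp (-(Complex.I * (⟪x, k - l⟫ : ℂ)))) * ((Aq T φ q x : ℝ) : ℂ)) := by
          exact integral_congr_ae (Filter.Eventually.of_forall hpt)
      _ = ∑ q : Fin 2, ∫ x : E2, ((l q : ℝ) : ℂ) *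
          ((Complex.exp (-(Complex.I * (⟪x, k + l⟫ : ℂ))) +
            Complex.exp (-(Complex.I * (⟪x, k - l⟫ : ℂ)))) * ((Aq T φ q x : ℝ) : ℂ)) :=
          integral_finset_sum _ fun q _ => hterm_int q
      _ = _ := by
          refine Finset.sum_congr rfl fun q _ => ?_
          rw [integral_const_mul]
          congr 1
          rw [show (fun x : E2 => (Complex.exp (-(Complex.I * (⟪x, k + l⟫ : ℂ))) +
              Complex.exp (-(Complex.I * (⟪x, k - l⟫ : ℂ)))) * ((Aq T φ q x : ℝ) : ℂ))
            = fun x : E2 => Complex.exp (-(Complex.I * (⟪x, k + l⟫ : ℂ))) * ((Aq T φ q x : ℝ) : ℂ)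
              + Complex.exp (-(Complex.I * (⟪x, k - l⟫ : ℂ))) * ((Aq T φ q x : ℝ) : ℂ)
            from funext fun x => by ring]
          exact integral_add (hG_int (k + l) q) (hG_int (k - l) q)
  -- conclude
  have hfinal := hder.const_smul ((2 * Real.pi)⁻¹ : ℝ)
  refine hfinal.congr_deriv ?_
  symm
  rw [hint_eq, Finset.smul_sum]
  refine Finset.sum_congr rfl fun q _ => ?_
  simp only [ftR, ft]
  simp only [Complex.real_smul]
  ring
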